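/- arXiv:2512.20972 — 4 statements merged into one kernel-verified Lean document; each statement's English description precedes it below -/
import Mathlib

section
/- Let E be a nonzero complex symmetric function space on (0,∞) that is strongly symmetric. Let A ⊆ (0,∞) be measurable with 0 < m(A) < ∞ and χ_A ∈ E. Then every f ∈ E is integrable over A, and sup{ |∫_A f dm| : f ∈ E, ‖f‖_E ≤ 1 } = m(A) / ‖χ_A‖_E. Equivalently, the functional f ↦ (‖χ_A‖_E^2 / m(A)) ∫_A f dm is a support functional of χ_A in E: it has dual norm ‖χ_A‖_E and takes the value ‖χ_A‖_E^2 at χ_A. -/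
/-!
Common framework: complex symmetric function spaces on intervals of `(0,∞)`,
modelled on a.e.-equivalence classes of measurable functions (`AEEqFun`).
-/

open MeasureTheory Filter Set Topology
open scoped ENNReal

noncomputable section

namespace SymmPaper

/-- Lebesgue measure on the interval `(0,1)`. -/
def m01 : Measure ℝ := volume.restrict (Set.Ioo 0 1)

/-- Lebesgue measure on the half line `(0,∞)`. -/
def mInf : Measure ℝ := volume.restrict (Set.Ioi 0)

/-- The distribution function `s ↦ μ{ |f| > s }` of (the class of) a measurable function. -/
def distrib (μ : Measure ℝ) (f : ℝ →ₘ[μ] ℂ) (s : ℝ) : ℝ≥0∞ :=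
  μ {x | s < ‖f x‖}

/-- The decreasing rearrangement `μ(t; f) = inf{ s ≥ 0 : μ{|f| > s} ≤ t }`. -/
def rearr (μ : Measure ℝ) (f : ℝ →ₘ[μ] ℂ) (t : ℝ) : ℝ :=
  sInf {s : ℝ | 0 ≤ s ∧ distrib μ f s ≤ ENNReal.ofReal t}

/-- Membership in `S(I)`: `μ{|f| > s} < ∞` for some `s > 0`. -/
def memS (μ : Measure ℝ) (f : ℝ →ₘ[μ] ℂ) : Prop :=
  ∃ s > (0 : ℝ), distrib μ f s < ⊤

/-- A (complex) symmetric function space on the measure space `(ℝ, μ)`: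
a linear subspace of `S(I)` with a complete norm such that domination of decreasing
rearrangements implies membership together with the norm inequality. -/
structure SymmetricSpace (μ : Measure ℝ) where
  carrier : Set (ℝ →ₘ[μ] ℂ)
  nrm : (ℝ →ₘ[μ] ℂ) → ℝ
  memS_of_mem : ∀ f ∈ carrier, memS μ f
  zero_mem : 0 ∈ carrier
  add_mem : ∀ f ∈ carrier, ∀ g ∈ carrier, f + g ∈ carrier
  smul_mem : ∀ (c : ℂ), ∀ f ∈ carrier, c • f ∈ carrier
  nrm_eq_zero_iff : ∀ f ∈ carrier, (nrm f = 0 ↔ f = 0)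
  nrm_add_le : ∀ f ∈ carrier, ∀ g ∈ carrier, nrm (f + g) ≤ nrm f + nrm g
  nrm_smul : ∀ (c : ℂ), ∀ f ∈ carrier, nrm (c • f) = ‖c‖ * nrm f
  symm_mem : ∀ f ∈ carrier, ∀ g, memS μ g →
    (∀ t > (0 : ℝ), rearr μ g t ≤ rearr μ f t) → g ∈ carrier ∧ nrm g ≤ nrm f
  complete : ∀ u : ℕ → ℝ →ₘ[μ] ℂ, (∀ n, u n ∈ carrier) →
    (∀ ε > (0 : ℝ), ∃ N : ℕ, ∀ m ≥ N, ∀ n ≥ N, nrm (u m - u n) < ε) →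
    ∃ g ∈ carrier, Tendsto (fun n => nrm (u n - g)) atTop (nhds 0)

/-- A symmetric space is nonzero if it contains a function that is not a.e. zero. -/
def SymmetricSpace.Nonzero {μ : Measure ℝ} (E : SymmetricSpace μ) : Prop :=
  ∃ f ∈ E.carrier, f ≠ 0

/-- `E` coincides with `L_p` (as sets). -/
def coincidesLp {μ : Measure ℝ} (E : SymmetricSpace μ) (p : ℝ≥0∞) : Prop :=
  E.carrier = {f : ℝ →ₘ[μ] ℂ | MemLp (⇑f) p μ}

/-- A surjective linear isometry from `E` onto `F`. -/
def IsIsometryOnto {μ ν : Measure ℝ} (E : SymmetricSpace μ) (F : SymmetricSpace ν)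
    (T : (ℝ →ₘ[μ] ℂ) → (ℝ →ₘ[ν] ℂ)) : Prop :=
  (∀ f ∈ E.carrier, T f ∈ F.carrier) ∧
  (∀ f ∈ E.carrier, ∀ g ∈ E.carrier, T (f + g) = T f + T g) ∧
  (∀ (c : ℂ), ∀ f ∈ E.carrier, T (c • f) = c • T f) ∧
  (∀ f ∈ E.carrier, F.nrm (T f) = E.nrm f) ∧
  (∀ g ∈ F.carrier, ∃ f ∈ E.carrier, T f = g)

end SymmPaper

namespace SymmPaper

/-- The Köthe dual `E^×` of a symmetric space:
all `g ∈ S(I)` with `sup{ ∫ |f g| dm : f ∈ E, ‖f‖_E ≤ 1 } < ∞`. -/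
def KotheDual {μ : Measure ℝ} (E : SymmetricSpace μ) : Set (ℝ →ₘ[μ] ℂ) :=
  {g | memS μ g ∧ ∃ C : ℝ, ∀ f ∈ E.carrier, E.nrm f ≤ 1 →
    (∫⁻ x, ‖f x * g x‖₊ ∂μ) ≤ ENNReal.ofReal C}

/-- `E` is strongly symmetric: Hardy–Littlewood–Pólya submajorization of decreasing
rearrangements implies the norm inequality. -/
def StronglySymmetric {μ : Measure ℝ} (E : SymmetricSpace μ) : Prop :=
  ∀ f ∈ E.carrier, ∀ g ∈ E.carrier,
    (∀ t > (0 : ℝ), (∫⁻ s in Set.Ioo 0 t, ENNReal.ofReal (rearr μ g s)) ≤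
      ∫⁻ s in Set.Ioo 0 t, ENNReal.ofReal (rearr μ f s)) →
    E.nrm g ≤ E.nrm f

/-- `E` has the Fatou property: if `0 ≤ f_n ↑` a.e., `f_n → f` a.e. and the norms of the
`f_n` are bounded, then `f ∈ E` and `‖f‖_E = sup_n ‖f_n‖_E`. -/
def FatouProperty {μ : Measure ℝ} (E : SymmetricSpace μ) : Prop :=
  ∀ (u : ℕ → ℝ →ₘ[μ] ℂ) (f : ℝ →ₘ[μ] ℂ), (∀ n, u n ∈ E.carrier) →
    (∀ n, ∀ᵐ x ∂μ, (u n x).im = 0 ∧ 0 ≤ (u n x).re ∧ (u n x).re ≤ (u (n + 1) x).re) →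
    (∀ᵐ x ∂μ, Tendsto (fun n => u n x) atTop (nhds (f x))) →
    BddAbove (Set.range fun n => E.nrm (u n)) →
    f ∈ E.carrier ∧ E.nrm f = ⨆ n, E.nrm (u n)

end SymmPaper

namespace SymmPaper

/-- The indicator function `χ_A` of a measurable set, as an element over `(0,∞)`. -/
def indSet (A : Set ℝ) (hA : MeasurableSet A) : ℝ →ₘ[mInf] ℂ :=
  AEEqFun.mk (A.indicator fun _ => (1 : ℂ))
    (stronglyMeasurable_const.indicator hA).aestronglyMeasurable

section Helpers

variable {μ : Measure ℝ}

lemma distrib_anti (f : ℝ →ₘ[μ] ℂ) : Antitone (distrib μ f) :=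
  fun _s _t hst => measure_mono fun _x hx => lt_of_le_of_lt hst hx

lemma distrib_mk_eq (g : ℝ → ℂ) (hg : AEStronglyMeasurable g μ) (s : ℝ) :
    distrib μ (AEEqFun.mk g hg) s = μ {x | s < ‖g x‖} := by
  refine measure_congr ?_
  filter_upwards [AEEqFun.coeFn_mk g hg] with x hx
  exact congrArg (fun z : ℂ => (s < ‖z‖ : Prop)) hx

lemma distrib_le_of_forall_add (f : ℝ →ₘ[μ] ℂ) {s : ℝ} {T : ℝ≥0∞}
    (h : ∀ ε > (0 : ℝ), distrib μ f (s + ε) ≤ T) : distrib μ f s ≤ T := by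
  have hmono : Monotone (fun n : ℕ => {x | s + 1 / (n + 1) < ‖f x‖}) := by
    intro n m hnm x hx
    simp only [Set.mem_setOf_eq] at *
    have h1 : 1 / ((m : ℝ) + 1) ≤ 1 / ((n : ℝ) + 1) := by
      apply one_div_le_one_div_of_le (by positivity)
      have : (n : ℝ) ≤ m := Nat.cast_le.2 hnm
      linarith
    linarith
  have hset : {x | s < ‖f x‖}
      = ⋃ n : ℕ, {x | s + 1 / (n + 1) < ‖f x‖} := by
    ext x
    simp only [Set.mem_setOf_eq, Set.mem_iUnion]
    constructor
    · intro hx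
      obtain ⟨n, hn⟩ := exists_nat_one_div_lt (sub_pos.2 hx)
      exact ⟨n, by push_cast at hn ⊢; linarith⟩
    · rintro ⟨n, hn⟩
      have : (0 : ℝ) < 1 / ((n : ℝ) + 1) := by positivity
      push_cast at hn
      linarith
  rw [distrib, hset, hmono.measure_iUnion]
  exact iSup_le fun n => h _ (by positivity)

lemma rearr_nonneg (f : ℝ →ₘ[μ] ℂ) (t : ℝ) : 0 ≤ rearr μ f t :=
  Real.sInf_nonneg fun _x hx => hx.1

lemma rearr_le (f : ℝ →ₘ[μ] ℂ) {s t : ℝ} (hs : 0 ≤ s)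
    (h : distrib μ f s ≤ ENNReal.ofReal t) : rearr μ f t ≤ s :=
  csInf_le ⟨0, fun _x hx => hx.1⟩ ⟨hs, h⟩

lemma sset_nonempty {f : ℝ →ₘ[μ] ℂ} (hf : memS μ f) {t : ℝ} (ht : 0 < t) :
    {s : ℝ | 0 ≤ s ∧ distrib μ f s ≤ ENNReal.ofReal t}.Nonempty := by
  obtain ⟨s₀, hs₀, hfin⟩ := hf
  have hmeas : ∀ c : ℝ, MeasurableSet {x | c < ‖f x‖} := fun c =>
    measurableSet_lt measurable_const ((continuous_norm.measurable.comp f.measurable))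
  have hanti : Antitone (fun n : ℕ => {x | s₀ + (n : ℝ) < ‖f x‖}) := by
    intro n m hnm x hx
    simp only [Set.mem_setOf_eq] at *
    have : (n : ℝ) ≤ m := Nat.cast_le.2 hnm
    linarith
  have htend := tendsto_measure_iInter_atTop
    (fun n => (hmeas _).nullMeasurableSet) hanti
    ⟨0, by simpa [distrib] using hfin.ne⟩
  have hinter : (⋂ n : ℕ, {x | s₀ + (n : ℝ) < ‖f x‖}) = ∅ := by
    ext x
    simp only [Set.mem_iInter, Set.mem_setOf_eq, Set.mem_empty_iff_false, iff_false,
      not_forall, not_lt]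
    obtain ⟨n, hn⟩ := exists_nat_gt (‖f x‖ - s₀)
    exact ⟨n, by linarith⟩
  rw [hinter, measure_empty] at htend
  have hev : ∀ᶠ n : ℕ in atTop,
      μ {x | s₀ + (n : ℝ) < ‖f x‖} < ENNReal.ofReal t := by
    have hpos : (0 : ℝ≥0∞) < ENNReal.ofReal t := by simpa using ht
    exact htend.eventually_lt_const hpos
  obtain ⟨n, hn⟩ := hev.exists
  exact ⟨s₀ + n, by positivity, hn.le⟩

lemma distrib_le_of_rearr_le {f : ℝ →ₘ[μ] ℂ} {t σ : ℝ}
    (hne : {s : ℝ | 0 ≤ s ∧ distrib μ f s ≤ ENNReal.ofReal t}.Nonempty)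
    (h : rearr μ f t ≤ σ) : distrib μ f σ ≤ ENNReal.ofReal t := by
  apply distrib_le_of_forall_add
  intro ε hε
  obtain ⟨s', hs'mem, hs'lt⟩ := exists_lt_of_csInf_lt hne
    (show rearr μ f t < σ + ε from lt_of_le_of_lt h (by linarith))
  exact le_trans (distrib_anti f hs'lt.le) hs'mem.2

lemma lt_rearr_iff {f : ℝ →ₘ[μ] ℂ} {t σ : ℝ}
    (hne : {s : ℝ | 0 ≤ s ∧ distrib μ f s ≤ ENNReal.ofReal t}.Nonempty)
    (hσ : 0 ≤ σ) :
    σ < rearr μ f t ↔ ENNReal.ofReal t < distrib μ f σ := by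
  constructor
  · intro h
    by_contra hc
    push_neg at hc
    exact absurd (rearr_le f hσ hc) (not_le.2 h)
  · intro h
    by_contra hc
    push_neg at hc
    exact absurd (distrib_le_of_rearr_le hne hc) (not_le.2 h)

lemma rearr_mono {f g : ℝ →ₘ[μ] ℂ} {t : ℝ}
    (hne : {s : ℝ | 0 ≤ s ∧ distrib μ f s ≤ ENNReal.ofReal t}.Nonempty)
    (h : ∀ s, 0 ≤ s → distrib μ g s ≤ distrib μ f s) :
    rearr μ g t ≤ rearr μ f t :=
  csInf_le_csInf ⟨0, fun _x hx => hx.1⟩ hne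
    (fun s hs => ⟨hs.1, le_trans (h s hs.1) hs.2⟩)

lemma rearr_anti {f : ℝ →ₘ[μ] ℂ} {s t : ℝ} (h : s ≤ t)
    (hne : {u : ℝ | 0 ≤ u ∧ distrib μ f u ≤ ENNReal.ofReal s}.Nonempty) :
    rearr μ f t ≤ rearr μ f s :=
  csInf_le_csInf ⟨0, fun _x hx => hx.1⟩ hne
    (fun u hu => ⟨hu.1, le_trans hu.2 (ENNReal.ofReal_le_ofReal h)⟩)

end Helpers

/-- **commutative case of the support-functional proposition.**
For a nonzero strongly symmetric function space `E` on `(0,∞)` and a measurable set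
`A ⊆ (0,∞)` with `0 < m(A) < ∞` and `χ_A ∈ E`: every `f ∈ E` is integrable over `A`,
`sup{ |∫_A f| : ‖f‖_E ≤ 1 } = m(A)/‖χ_A‖_E`, and the functional
`f ↦ (‖χ_A‖_E²/m(A)) ∫_A f` takes the value `‖χ_A‖_E²` at `χ_A`; i.e. it is a support
functional of `χ_A`. -/
theorem indicator_support_functional
    (E : SymmetricSpace mInf) (hE : E.Nonzero) (hEs : StronglySymmetric E)
    (A : Set ℝ) (hA : MeasurableSet A) (hAsub : A ⊆ Set.Ioi 0)
    (hApos : 0 < volume A) (hAfin : volume A < ⊤)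
    (hchi : indSet A hA ∈ E.carrier) :
    (∀ f ∈ E.carrier, IntegrableOn (⇑f) A mInf) ∧
    sSup {r : ℝ | ∃ f ∈ E.carrier, E.nrm f ≤ 1 ∧ r = ‖∫ x in A, f x ∂mInf‖}
      = (volume A).toReal / E.nrm (indSet A hA) ∧
    ((E.nrm (indSet A hA) ^ 2 / (volume A).toReal : ℝ) : ℂ) * (∫ x in A, (indSet A hA) x ∂mInf)
      = ((E.nrm (indSet A hA) ^ 2 : ℝ) : ℂ) := by
  classical
  set χ := indSet A hA with hχdef
  have hμA : mInf A = volume A := by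
    rw [mInf, Measure.restrict_apply hA, Set.inter_eq_self_of_subset_left hAsub]
  set a : ℝ := (volume A).toReal with hadef
  have ha : 0 < a := ENNReal.toReal_pos hApos.ne' hAfin.ne
  have hvA : volume A = ENNReal.ofReal a := (ENNReal.ofReal_toReal hAfin.ne).symm
  have hχcoe : ⇑χ =ᵐ[mInf] A.indicator (fun _ => (1 : ℂ)) := AEEqFun.coeFn_mk _ _
  have hnrm0 : E.nrm 0 = 0 := (E.nrm_eq_zero_iff 0 E.zero_mem).2 rfl
  have hnonneg : ∀ h ∈ E.carrier, 0 ≤ E.nrm h := by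
    intro h hh
    have h2 := E.nrm_add_le h hh _ (E.smul_mem (-1) h hh)
    have h3 : E.nrm ((-1 : ℂ) • h) = E.nrm h := by
      rw [E.nrm_smul (-1) h hh]; simp
    rw [show h + (-1 : ℂ) • h = 0 by module, hnrm0, h3] at h2
    linarith
  have hχne : χ ≠ 0 := by
    intro h0
    have hae : A.indicator (fun _ => (1 : ℂ)) =ᵐ[mInf] 0 := by
      refine hχcoe.symm.trans ?_
      rw [h0]
      exact AEEqFun.coeFn_zero
    rw [Filter.EventuallyEq, ae_iff] at hae
    have hsetA : {x : ℝ | ¬ A.indicator (fun _ => (1 : ℂ)) x = (0 : ℝ → ℂ) x} = A := by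
      ext x
      by_cases hx : x ∈ A <;>
        simp [Set.indicator_of_mem, Set.indicator_of_notMem, hx]
    rw [hsetA, hμA] at hae
    exact absurd hae hApos.ne'
  have hχpos : 0 < E.nrm χ := by
    rcases (hnonneg χ hchi).lt_or_eq with h | h
    · exact h
    · exact absurd ((E.nrm_eq_zero_iff χ hchi).1 h.symm) hχne
  have hdistrib_smul : ∀ c : ℝ, 0 ≤ c → ∀ s : ℝ, 0 ≤ s →
      distrib mInf ((c : ℂ) • χ) s = if s < c then volume A else 0 := by
    intro c hc s hs
    have hae2 : ⇑((c : ℂ) • χ) =ᵐ[mInf]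
        fun x => (c : ℂ) * A.indicator (fun _ => (1 : ℂ)) x := by
      filter_upwards [AEEqFun.coeFn_smul (c : ℂ) χ, hχcoe] with x h1 h2
      rw [h1]
      simp [h2]
    have hmeq : distrib mInf ((c : ℂ) • χ) s
        = mInf {x | s < ‖(c : ℂ) * A.indicator (fun _ => (1 : ℂ)) x‖} := by
      refine measure_congr ?_
      filter_upwards [hae2] with x hx
      exact congrArg (fun z : ℂ => (s < ‖z‖ : Prop)) hx
    rw [hmeq]
    have hset : {x | s < ‖(c : ℂ) * A.indicator (fun _ => (1 : ℂ)) x‖}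
        = if s < c then A else (∅ : Set ℝ) := by
      ext x
      by_cases hx : x ∈ A
      · simp only [Set.indicator_of_mem hx, mul_one, Complex.norm_real, Real.norm_eq_abs,
          abs_of_nonneg hc, Set.mem_setOf_eq]
        by_cases hsc : s < c <;> simp [hsc, hx]
      · simp only [Set.indicator_of_notMem hx, mul_zero, map_zero, Set.mem_setOf_eq]
        by_cases hsc : s < c <;> simp [hsc, hx, not_lt.2 hs]
    rw [hset]
    by_cases hsc : s < c <;> simp [hsc, hμA]
  have hrearr_smul : ∀ c : ℝ, 0 ≤ c → ∀ t : ℝ, 0 < t →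
      rearr mInf ((c : ℂ) • χ) t = if ENNReal.ofReal t < volume A then c else 0 := by
    intro c hc t ht
    by_cases hlt : ENNReal.ofReal t < volume A
    · rw [if_pos hlt]
      refine le_antisymm (rearr_le _ hc ?_) (le_csInf ⟨c, hc, ?_⟩ ?_)
      · rw [hdistrib_smul c hc c hc, if_neg (lt_irrefl c)]
        exact zero_le
      · rw [hdistrib_smul c hc c hc, if_neg (lt_irrefl c)]
        exact zero_le
      · rintro s ⟨hs0, hsd⟩
        by_contra hsc
        push_neg at hsc
        rw [hdistrib_smul c hc s hs0, if_pos hsc] at hsd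
        exact absurd (lt_of_lt_of_le hlt hsd) (lt_irrefl _)
    · rw [if_neg hlt]
      push_neg at hlt
      refine le_antisymm (rearr_le _ le_rfl ?_) (rearr_nonneg _ _)
      rw [hdistrib_smul c hc 0 le_rfl]
      split
      · exact hlt
      · exact zero_le
  have hsmul_int : ∀ c : ℝ, 0 ≤ c → ∀ t : ℝ, 0 < t →
      (∫⁻ s in Set.Ioo 0 t, ENNReal.ofReal (rearr mInf ((c : ℂ) • χ) s))
        = ENNReal.ofReal c * ENNReal.ofReal (min t a) := by
    intro c hc t ht
    have h1 : ∀ s ∈ Set.Ioo (0 : ℝ) t, ENNReal.ofReal (rearr mInf ((c : ℂ) • χ) s)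
        = (Set.Iio a).indicator (fun _ => ENNReal.ofReal c) s := by
      intro s hs
      rw [hrearr_smul c hc s hs.1]
      have hiff : ENNReal.ofReal s < volume A ↔ s < a := by
        rw [hvA]
        exact ENNReal.ofReal_lt_ofReal_iff ha
      by_cases hsa : s < a
      · rw [if_pos (hiff.2 hsa)]
        exact (Set.indicator_of_mem (show s ∈ Set.Iio a from hsa) (fun _ => ENNReal.ofReal c)).symm
      · rw [if_neg (fun hlt => hsa (hiff.1 hlt)),
          Set.indicator_of_notMem (show s ∉ Set.Iio a from hsa)]
        simp
    rw [setLIntegral_congr_fun measurableSet_Ioo h1,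
      lintegral_indicator measurableSet_Iio,
      Measure.restrict_restrict measurableSet_Iio, setLIntegral_const]
    have h2 : Set.Iio a ∩ Set.Ioo 0 t = Set.Ioo 0 (min t a) := by
      ext x
      simp only [Set.mem_inter_iff, Set.mem_Iio, Set.mem_Ioo, lt_min_iff]
      tauto
    rw [h2, Real.volume_Ioo, sub_zero]
  have hkey : ∀ f ∈ E.carrier,
      (∫⁻ x in A, (‖f x‖₊ : ℝ≥0∞) ∂mInf) ≤ ENNReal.ofReal (a * E.nrm f / E.nrm χ) := by
    intro f hf
    have hfnn : 0 ≤ E.nrm f := hnonneg f hf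
    set k : ℝ →ₘ[mInf] ℂ :=
      AEEqFun.mk (A.indicator ⇑f) (f.aestronglyMeasurable.indicator hA) with hk
    have hdk : ∀ s : ℝ, distrib mInf k s
        = mInf {x | s < ‖A.indicator (⇑f) x‖} :=
      fun s => distrib_mk_eq _ _ s
    have hkf : ∀ s, 0 ≤ s → distrib mInf k s ≤ distrib mInf f s := by
      intro s hs
      rw [hdk]
      refine measure_mono fun x hx => ?_
      simp only [Set.mem_setOf_eq] at *
      by_cases hxA : x ∈ A
      · rwa [Set.indicator_of_mem hxA] at hx
      · rw [Set.indicator_of_notMem hxA] at hx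
        simp only [norm_zero] at hx
        linarith
    have hkA : ∀ s, 0 ≤ s → distrib mInf k s ≤ volume A := by
      intro s hs
      rw [hdk, ← hμA]
      refine measure_mono fun x hx => ?_
      simp only [Set.mem_setOf_eq] at hx
      by_cases hxA : x ∈ A
      · exact hxA
      · rw [Set.indicator_of_notMem hxA] at hx
        simp only [norm_zero] at hx
        linarith
    have hkfin : ∀ s : ℝ, 0 ≤ s → distrib mInf k s ≠ ⊤ :=
      fun s hs => (lt_of_le_of_lt (hkA s hs) hAfin).ne
    have hkS : memS mInf k := ⟨1, one_pos, lt_of_le_of_lt (hkA 1 one_pos.le) hAfin⟩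
    have hfS : memS mInf f := E.memS_of_mem f hf
    set dR : ℝ → ℝ := fun σ => (distrib mInf k (max σ 0)).toReal with hdR
    have hdRanti : Antitone dR := fun s t hst =>
      ENNReal.toReal_mono (hkfin _ (le_max_right _ _))
        (distrib_anti k (max_le_max hst le_rfl))
    have hdRnn : ∀ σ, 0 ≤ dR σ := fun σ => ENNReal.toReal_nonneg
    have hdReq : ∀ σ, 0 ≤ σ → ENNReal.ofReal (dR σ) = distrib mInf k σ := by
      intro σ hσ
      rw [hdR]
      simp only [max_eq_left hσ]
      exact ENNReal.ofReal_toReal (hkfin σ hσ)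
    have hlc1 : (∫⁻ x, ENNReal.ofReal (‖k x‖) ∂mInf)
        = ∫⁻ t in Set.Ioi 0, distrib mInf k t :=
      lintegral_eq_lintegral_meas_lt mInf
        (Filter.Eventually.of_forall fun x => norm_nonneg _)
        ((continuous_norm.measurable.comp k.measurable).aemeasurable)
    have hlc2 : (∫⁻ σ, ENNReal.ofReal (dR σ) ∂mInf)
        = ∫⁻ t in Set.Ioi 0, mInf {σ | t < dR σ} :=
      lintegral_eq_lintegral_meas_lt mInf
        (Filter.Eventually.of_forall hdRnn) hdRanti.measurable.aemeasurable
    have hIoi1 : (∫⁻ t in Set.Ioi 0, distrib mInf k t)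
        = ∫⁻ σ, ENNReal.ofReal (dR σ) ∂mInf := by
      have hre : (∫⁻ σ, ENNReal.ofReal (dR σ) ∂mInf)
          = ∫⁻ σ in Set.Ioi 0, ENNReal.ofReal (dR σ) := rfl
      rw [hre]
      exact (setLIntegral_congr_fun measurableSet_Ioi
        (fun t ht => hdReq t ht.le)).symm
    have hsetrearr : ∀ t : ℝ, 0 < t →
        mInf {σ | t < dR σ} = ENNReal.ofReal (rearr mInf k t) := by
      intro t ht
      have hne := sset_nonempty hkS ht
      have hmeasset : MeasurableSet {σ : ℝ | t < dR σ} :=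
        measurableSet_lt measurable_const hdRanti.measurable
      have hra : mInf {σ : ℝ | t < dR σ} = volume ({σ : ℝ | t < dR σ} ∩ Set.Ioi 0) :=
        Measure.restrict_apply hmeasset
      rw [hra]
      have hseteq : {σ : ℝ | t < dR σ} ∩ Set.Ioi 0 = Set.Ioo 0 (rearr mInf k t) := by
        ext σ
        simp only [Set.mem_inter_iff, Set.mem_setOf_eq, Set.mem_Ioi, Set.mem_Ioo]
        constructor
        · rintro ⟨htd, hσ⟩
          refine ⟨hσ, ?_⟩
          rw [lt_rearr_iff hne hσ.le, ← hdReq σ hσ.le]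
          exact (ENNReal.ofReal_lt_ofReal_iff (lt_trans ht htd)).2 htd
        · rintro ⟨hσ, hlt⟩
          refine ⟨?_, hσ⟩
          have h2 := (lt_rearr_iff hne hσ.le).1 hlt
          rw [← hdReq σ hσ.le] at h2
          exact (ENNReal.ofReal_lt_ofReal_iff_of_nonneg ht.le).1 h2
      rw [hseteq, Real.volume_Ioo, sub_zero]
    have hIoi2 : (∫⁻ t in Set.Ioi 0, mInf {σ | t < dR σ})
        = ∫⁻ t in Set.Ioi 0, ENNReal.ofReal (rearr mInf k t) :=
      setLIntegral_congr_fun measurableSet_Ioi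
        (fun t ht => hsetrearr t ht)
    set J := ∫⁻ t in Set.Ioi 0, ENNReal.ofReal (rearr mInf k t) with hJ
    have hP1 : (∫⁻ x in A, (‖f x‖₊ : ℝ≥0∞) ∂mInf) = J := by
      rw [← hIoi2, ← hlc2, ← hIoi1, ← hlc1]
      have e1 : (∫⁻ x, ENNReal.ofReal (‖k x‖) ∂mInf)
          = ∫⁻ x, ENNReal.ofReal (‖A.indicator (⇑f) x‖) ∂mInf := by
        apply lintegral_congr_ae
        filter_upwards [AEEqFun.coeFn_mk (A.indicator ⇑f)
          (f.aestronglyMeasurable.indicator hA)] with x hx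
        rw [hk, hx]
      rw [e1]
      have e2 : ∀ x, ENNReal.ofReal (‖A.indicator (⇑f) x‖)
          = A.indicator (fun x => ENNReal.ofReal (‖f x‖)) x := by
        intro x
        by_cases hx : x ∈ A <;>
          simp [Set.indicator_of_mem, Set.indicator_of_notMem, hx]
      simp_rw [e2]
      rw [lintegral_indicator hA]
      refine (lintegral_congr fun x => ?_).symm
      rw [ofReal_norm, enorm_eq_nnnorm]
    have hksupp : ∀ s : ℝ, a ≤ s → rearr mInf k s = 0 := by
      intro s hs
      refine le_antisymm (rearr_le k le_rfl ?_) (rearr_nonneg _ _)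
      calc distrib mInf k 0 ≤ volume A := hkA 0 le_rfl
        _ = ENNReal.ofReal a := hvA
        _ ≤ ENNReal.ofReal s := ENNReal.ofReal_le_ofReal hs
    have hsplit : J = ∫⁻ s in Set.Ioo 0 a, ENNReal.ofReal (rearr mInf k s) := by
      have hu : Set.Ioi (0 : ℝ) = Set.Ioo 0 a ∪ Set.Ici a := by
        ext x
        simp only [Set.mem_Ioi, Set.mem_union, Set.mem_Ioo, Set.mem_Ici]
        constructor
        · intro hx
          rcases lt_or_ge x a with h | h
          exacts [Or.inl ⟨hx, h⟩, Or.inr h]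
        · rintro (⟨h, _⟩ | h)
          · exact h
          · linarith
      have hdisj : Disjoint (Set.Ioo (0 : ℝ) a) (Set.Ici a) := by
        rw [Set.disjoint_left]
        rintro x ⟨_, hxa⟩ hx
        exact absurd hxa (not_lt.2 hx)
      rw [hJ, hu, lintegral_union measurableSet_Ici hdisj]
      have hzero : (∫⁻ s in Set.Ici a, ENNReal.ofReal (rearr mInf k s)) = 0 := by
        have hz : ∀ s ∈ Set.Ici a, ENNReal.ofReal (rearr mInf k s) = (0 : ℝ≥0∞) :=
          fun s hs => by rw [hksupp s hs, ENNReal.ofReal_zero]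
        rw [setLIntegral_congr_fun measurableSet_Ici hz,
          lintegral_zero]
      rw [hzero, add_zero]
    have hclaim : ∀ c : ℝ, 0 ≤ c → ENNReal.ofReal (c * a) ≤ J →
        c * E.nrm χ ≤ E.nrm f := by
      intro c hc hcJ
      have hgge : ∀ t > (0 : ℝ),
          (∫⁻ s in Set.Ioo 0 t, ENNReal.ofReal (rearr mInf ((c : ℂ) • χ) s))
            ≤ ∫⁻ s in Set.Ioo 0 t, ENNReal.ofReal (rearr mInf f s) := by
        intro t ht
        have hPk : (∫⁻ s in Set.Ioo 0 t, ENNReal.ofReal (rearr mInf k s))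
            ≤ ∫⁻ s in Set.Ioo 0 t, ENNReal.ofReal (rearr mInf f s) := by
          refine lintegral_mono_ae ?_
          rw [ae_restrict_iff' measurableSet_Ioo]
          exact Filter.Eventually.of_forall fun s hs =>
            ENNReal.ofReal_le_ofReal (rearr_mono (sset_nonempty hfS hs.1) hkf)
        rw [hsmul_int c hc t ht]
        rcases le_or_gt a t with hat | hta
        · rw [min_eq_right hat]
          calc ENNReal.ofReal c * ENNReal.ofReal a
              = ENNReal.ofReal (c * a) := (ENNReal.ofReal_mul hc).symm
            _ ≤ J := hcJ
            _ = ∫⁻ s in Set.Ioo 0 a, ENNReal.ofReal (rearr mInf k s) := hsplit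
            _ ≤ ∫⁻ s in Set.Ioo 0 t, ENNReal.ofReal (rearr mInf k s) :=
                lintegral_mono_set (Set.Ioo_subset_Ioo_right hat)
            _ ≤ _ := hPk
        · rw [min_eq_left hta.le]
          refine le_trans ?_ hPk
          set B := ENNReal.ofReal (rearr mInf k t) with hB
          set I₁ := ∫⁻ s in Set.Ioo 0 t, ENNReal.ofReal (rearr mInf k s) with hI₁
          have hlow : B * ENNReal.ofReal t ≤ I₁ := by
            calc B * ENNReal.ofReal t = ∫⁻ _ in Set.Ioo (0 : ℝ) t, B := by
                  rw [setLIntegral_const, Real.volume_Ioo, sub_zero]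
              _ ≤ I₁ := by
                  refine lintegral_mono_ae ?_
                  rw [ae_restrict_iff' measurableSet_Ioo]
                  exact Filter.Eventually.of_forall fun s hs =>
                    ENNReal.ofReal_le_ofReal
                      (rearr_anti hs.2.le (sset_nonempty hkS hs.1))
          have hup : (∫⁻ s in Set.Ico t a, ENNReal.ofReal (rearr mInf k s))
              ≤ B * ENNReal.ofReal (a - t) := by
            calc (∫⁻ s in Set.Ico t a, ENNReal.ofReal (rearr mInf k s))
                ≤ ∫⁻ _ in Set.Ico t a, B := by
                  refine lintegral_mono_ae ?_
                  rw [ae_restrict_iff' measurableSet_Ico]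
                  exact Filter.Eventually.of_forall fun s hs =>
                    ENNReal.ofReal_le_ofReal
                      (rearr_anti hs.1 (sset_nonempty hkS ht))
              _ = B * ENNReal.ofReal (a - t) := by
                  rw [setLIntegral_const, Real.volume_Ico]
          have hdecomp : (∫⁻ s in Set.Ioo 0 a, ENNReal.ofReal (rearr mInf k s))
              = I₁ + ∫⁻ s in Set.Ico t a, ENNReal.ofReal (rearr mInf k s) := by
            have hdisj2 : Disjoint (Set.Ioo (0 : ℝ) t) (Set.Ico t a) := by
              rw [Set.disjoint_left]
              rintro x ⟨_, hxt⟩ hx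
              exact absurd hxt (not_lt.2 hx.1)
            rw [hI₁, ← lintegral_union measurableSet_Ico hdisj2]
            have hu2 : Set.Ioo (0 : ℝ) t ∪ Set.Ico t a = Set.Ioo 0 a := by
              ext x
              simp only [Set.mem_union, Set.mem_Ioo, Set.mem_Ico]
              constructor
              · rintro (⟨h1, h2⟩ | ⟨h1, h2⟩)
                exacts [⟨h1, h2.trans hta⟩, ⟨lt_of_lt_of_le ht h1, h2⟩]
              · rintro ⟨hx0, hxa⟩
                rcases lt_or_ge x t with h | h
                exacts [Or.inl ⟨hx0, h⟩, Or.inr ⟨h, hxa⟩]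
            rw [hu2]
          by_contra hcon
          push_neg at hcon
          have hBc : B < ENNReal.ofReal c := by
            have h5 := lt_of_le_of_lt hlow hcon
            exact (ENNReal.mul_lt_mul_iff_left
              (ENNReal.ofReal_pos.2 ht).ne' ENNReal.ofReal_ne_top).1 h5
          have hJlt : J < ENNReal.ofReal (c * a) := by
            calc J = I₁ + ∫⁻ s in Set.Ico t a, ENNReal.ofReal (rearr mInf k s) := by
                  rw [hsplit, hdecomp]
              _ < ENNReal.ofReal c * ENNReal.ofReal t
                    + ENNReal.ofReal c * ENNReal.ofReal (a - t) := by
                  refine ENNReal.add_lt_add_of_lt_of_le ?_ hcon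
                    (le_trans hup (mul_le_mul_left hBc.le _))
                  exact ne_top_of_le_ne_top
                    (ENNReal.mul_ne_top ENNReal.ofReal_ne_top ENNReal.ofReal_ne_top) hup
              _ = ENNReal.ofReal c * (ENNReal.ofReal t + ENNReal.ofReal (a - t)) :=
                  (mul_add _ _ _).symm
              _ = ENNReal.ofReal (c * a) := by
                  rw [← ENNReal.ofReal_add ht.le (by linarith), ← ENNReal.ofReal_mul hc]
                  congr 1
                  ring
          exact absurd hcJ (not_le.2 hJlt)
      have h6 := hEs f hf ((c : ℂ) • χ) (E.smul_mem _ _ hchi) hgge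
      rwa [E.nrm_smul _ _ hchi, Complex.norm_real, Real.norm_eq_abs, abs_of_nonneg hc] at h6
    have hJfin : J ≠ ⊤ := by
      intro hJtop
      have h7 := hclaim (E.nrm f / E.nrm χ + 1) (by positivity)
        (by rw [hJtop]; exact le_top)
      rw [add_mul, div_mul_cancel₀ _ (ne_of_gt hχpos), one_mul] at h7
      linarith
    have h1 : ENNReal.ofReal ((J.toReal / a) * a) ≤ J := by
      rw [div_mul_cancel₀ _ (ne_of_gt ha), ENNReal.ofReal_toReal hJfin]
    have h2 := hclaim (J.toReal / a) (by positivity) h1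
    have h3 : J.toReal ≤ a * E.nrm f / E.nrm χ := by
      rw [le_div_iff₀ hχpos]
      have h4 : (J.toReal / a * E.nrm χ) * a ≤ E.nrm f * a :=
        mul_le_mul_of_nonneg_right h2 ha.le
      calc J.toReal * E.nrm χ = (J.toReal / a * E.nrm χ) * a := by
            field_simp
          _ ≤ E.nrm f * a := h4
          _ = a * E.nrm f := mul_comm _ _
    rw [hP1]
    calc J = ENNReal.ofReal J.toReal := (ENNReal.ofReal_toReal hJfin).symm
      _ ≤ _ := ENNReal.ofReal_le_ofReal h3
  have hIntOn : ∀ f ∈ E.carrier, IntegrableOn (⇑f) A mInf := by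
    intro f hf
    refine ⟨f.aestronglyMeasurable.restrict, ?_⟩
    exact lt_of_le_of_lt (hkey f hf) ENNReal.ofReal_lt_top
  have hχint : (∫ x in A, χ x ∂mInf) = ((a : ℝ) : ℂ) := by
    have h1 : (∫ x in A, χ x ∂mInf) = ∫ x in A, A.indicator (fun _ => (1 : ℂ)) x ∂mInf :=
      integral_congr_ae hχcoe.restrict
    rw [h1, setIntegral_congr_fun hA (fun x hx => Set.indicator_of_mem hx _),
      setIntegral_const, measureReal_def, hμA]
    simp [hadef, Complex.real_smul]
  have hub : ∀ r ∈ {r : ℝ | ∃ f ∈ E.carrier, E.nrm f ≤ 1 ∧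
      r = ‖∫ x in A, f x ∂mInf‖}, r ≤ a / E.nrm χ := by
    rintro r ⟨f, hf, hf1, rfl⟩
    have hfnn : 0 ≤ E.nrm f := hnonneg f hf
    have h1 : ‖∫ x in A, f x ∂mInf‖
        ≤ (∫⁻ x in A, ENNReal.ofReal ‖f x‖ ∂mInf).toReal := by
      exact norm_integral_le_lintegral_norm _
    have h2 : (∫⁻ x in A, ENNReal.ofReal ‖f x‖ ∂mInf)
        ≤ ENNReal.ofReal (a * E.nrm f / E.nrm χ) := by
      refine le_trans (le_of_eq (lintegral_congr fun x => ?_)) (hkey f hf)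
      rw [ofReal_norm, enorm_eq_nnnorm]
    have h3 : (∫⁻ x in A, ENNReal.ofReal ‖f x‖ ∂mInf).toReal
        ≤ a * E.nrm f / E.nrm χ := by
      refine le_trans (ENNReal.toReal_mono ENNReal.ofReal_ne_top h2) ?_
      rw [ENNReal.toReal_ofReal (by positivity)]
    have h4 : a * E.nrm f / E.nrm χ ≤ a / E.nrm χ := by
      rw [div_le_div_iff₀ hχpos hχpos]
      nlinarith [mul_nonneg (mul_nonneg ha.le hχpos.le) (sub_nonneg.2 hf1)]
    linarith
  have hmem : a / E.nrm χ ∈ {r : ℝ | ∃ f ∈ E.carrier, E.nrm f ≤ 1 ∧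
      r = ‖∫ x in A, f x ∂mInf‖} := by
    refine ⟨(((E.nrm χ)⁻¹ : ℝ) : ℂ) • χ, E.smul_mem _ _ hchi, ?_, ?_⟩
    · rw [E.nrm_smul _ _ hchi, Complex.norm_real, Real.norm_eq_abs,
        abs_of_nonneg (inv_nonneg.2 hχpos.le), inv_mul_cancel₀ (ne_of_gt hχpos)]
    · have h1 : (∫ x in A, ((((E.nrm χ)⁻¹ : ℝ) : ℂ) • χ) x ∂mInf)
          = (((E.nrm χ)⁻¹ : ℝ) : ℂ) • ∫ x in A, χ x ∂mInf := by
        rw [integral_congr_ae (AEEqFun.coeFn_smul ((((E.nrm χ)⁻¹ : ℝ)) : ℂ) χ).restrict]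
        simp only [Pi.smul_apply]
        exact integral_smul _ _
      rw [h1, hχint, smul_eq_mul, ← Complex.ofReal_mul, Complex.norm_real, Real.norm_eq_abs,
        abs_of_nonneg (by positivity), inv_mul_eq_div]
  have hsup : sSup {r : ℝ | ∃ f ∈ E.carrier, E.nrm f ≤ 1 ∧
      r = ‖∫ x in A, f x ∂mInf‖} = a / E.nrm χ :=
    le_antisymm (csSup_le ⟨_, hmem⟩ hub) (le_csSup ⟨a / E.nrm χ, hub⟩ hmem)
  refine ⟨hIntOn, hsup, ?_⟩
  rw [hχint, ← Complex.ofReal_mul]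
  congr 1
  field_simp


end SymmPaper
end
end

section
/- Let X be a real Banach space and let (x_n)_{n≥1} be a sequence in X such that for every continuous linear functional f ∈ X* the sequence (f(x_n))_n converges in ℝ. Then the sequence (x_n) converges in the ball topology b_X to at most one limit: if x_n → a in b_X and x_n → b in b_X, then a = b. -/
open Filter Topology

open Pointwise

noncomputable section

namespace BallTop

/-- The ball topology `b_X` of a normed space: the coarsest topology in which every
norm-closed ball (of positive radius) is closed. -/
def ballTopology (X : Type*) [NormedAddCommGroup X] : TopologicalSpace X :=
  TopologicalSpace.generateFrom
    {s : Set X | ∃ (x : X) (ε : ℝ), 0 < ε ∧ s = (Metric.closedBall x ε)ᶜ}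

section Aux

set_option linter.unusedSectionVars false

variable {X : Type*} [NormedAddCommGroup X] [NormedSpace ℝ X]

lemma escape_aux {x : ℕ → X} {p : X}
    (hp : Tendsto x atTop (@nhds X (ballTopology X) p)) (c : X) {θ : ℝ} (hθ : 0 < θ) :
    ∀ᶠ n in atTop, ‖p - c‖ - θ ≤ ‖x n - c‖ := by
  rcases le_or_gt (‖p - c‖) θ with h | h
  · exact Eventually.of_forall fun n => le_trans (by linarith) (norm_nonneg _)
  · have hρ : (0:ℝ) < ‖p - c‖ - θ/2 := by linarith
    have hopen : IsOpen[ballTopology X] (Metric.closedBall c (‖p - c‖ - θ/2))ᶜ :=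
      TopologicalSpace.isOpen_generateFrom_of_mem ⟨c, ‖p - c‖ - θ/2, hρ, rfl⟩
    have hmem : p ∈ (Metric.closedBall c (‖p - c‖ - θ/2))ᶜ := by
      simp only [Set.mem_compl_iff, Metric.mem_closedBall, dist_eq_norm, not_le]
      linarith
    have hnh : (Metric.closedBall c (‖p - c‖ - θ/2))ᶜ ∈ @nhds X (ballTopology X) p := by
      letI T : TopologicalSpace X := ballTopology X
      exact IsOpen.mem_nhds hopen hmem
    have hev : ∀ᶠ n in atTop, x n ∈ (Metric.closedBall c (‖p - c‖ - θ/2))ᶜ :=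
      hp.eventually (Filter.eventually_mem_set.mpr hnh)
    refine hev.mono fun n hn => ?_
    simp only [Set.mem_compl_iff, Metric.mem_closedBall, dist_eq_norm, not_le] at hn
    linarith

lemma peel_aux {x : ℕ → X} {a b : X}
    (ha : Tendsto x atTop (@nhds X (ballTopology X) a))
    (hb : Tendsto x atTop (@nhds X (ballTopology X) b))
    (W : X) {t δ : ℝ} (ht : 0 < t) (hδ : 0 < δ) :
    ∀ᶠ m in atTop, ∀ᶠ n in atTop,
      ‖W - t • (a - b)‖ - δ ≤ ‖t • (x n - x m) + W‖ := by
  have hθ : 0 < δ / (2 * t) := by positivity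
  set w : X := -(t⁻¹ • W) with hw
  have htw : t • w = -W := by
    rw [hw, smul_neg, smul_smul, mul_inv_cancel₀ (ne_of_gt ht), one_smul]
  filter_upwards [escape_aux ha (b - w) hθ] with m hm
  filter_upwards [escape_aux hb (x m + w) hθ] with n hn
  have e0 : ‖b - (x m + w)‖ = ‖x m - (b - w)‖ := by
    rw [← norm_neg]; congr 1; abel
  have e3 : a - (b - w) = (a - b) + w := by abel
  have e1 : ‖a - (b - w)‖ - δ / t ≤ ‖x n - (x m + w)‖ := by
    rw [e0] at hn
    have : δ / t = δ / (2*t) + δ / (2*t) := by field_simp; ring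
    linarith
  have e2 : t • ((x n - x m) - w) = t • (x n - x m) + W := by
    rw [smul_sub, htw]; abel
  have e4 : t • ((a - b) + w) = t • (a - b) - W := by
    rw [smul_add, htw]; abel
  have e5 : x n - (x m + w) = (x n - x m) - w := by abel
  calc ‖W - t • (a - b)‖ - δ = ‖t • (a - b) - W‖ - δ := by rw [norm_sub_rev]
    _ = ‖t • ((a - b) + w)‖ - δ := by rw [e4]
    _ = t * ‖(a - b) + w‖ - δ := by rw [norm_smul, Real.norm_of_nonneg ht.le]
    _ ≤ t * ‖x n - (x m + w)‖ := by
        have e1' : ‖(a - b) + w‖ - δ / t ≤ ‖x n - (x m + w)‖ := by rw [← e3]; exact e1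
        have h2 := mul_le_mul_of_nonneg_left e1' ht.le
        have ht' : t * (δ / t) = δ := by field_simp
        nlinarith [h2]
    _ = t * ‖(x n - x m) - w‖ := by rw [e5]
    _ = ‖t • ((x n - x m) - w)‖ := by rw [norm_smul, Real.norm_of_nonneg ht.le]
    _ = ‖t • (x n - x m) + W‖ := by rw [e2]

def Inv (x : ℕ → X) (u : X) (ε : ℝ) (q : ℕ → ℕ × ℕ) (k : ℕ) : Prop :=
  ∀ μ : ℕ → ℝ, (∀ i, 0 ≤ μ i) → (∑ i ∈ Finset.range k, μ i) ≤ 1 →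
    2 * ‖u‖ - ε * (1 - (1/2 : ℝ)^k) ≤
      ‖(∑ i ∈ Finset.range k, μ i • (x (q i).2 - x (q i).1)) -
        (2 - ∑ i ∈ Finset.range k, μ i) • u‖

set_option maxHeartbeats 1000000 in
lemma step_aux {x : ℕ → X} {a b : X}
    (ha : Tendsto x atTop (@nhds X (ballTopology X) a))
    (hb : Tendsto x atTop (@nhds X (ballTopology X) b))
    {M ε : ℝ} (hM : ∀ n, ‖x n‖ ≤ M) (hε : 0 < ε)
    (q : ℕ → ℕ × ℕ) (k : ℕ) (hInv : Inv x (a - b) ε q k) :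
    ∃ p : ℕ × ℕ, k ≤ p.1 ∧ k ≤ p.2 ∧ Inv x (a - b) ε (Function.update q k p) (k + 1) := by
  have hM0 : 0 ≤ M := le_trans (norm_nonneg _) (hM 0)
  set v : ℕ → X := fun i => x (q i).2 - x (q i).1 with hvdef
  have hv2M : ∀ s t : ℕ, ‖x s - x t‖ ≤ 2 * M := fun s t =>
    le_trans (norm_sub_le _ _) (by linarith [hM s, hM t])
  set C : ℝ := 2 * M + ‖a - b‖ + 1 with hCdef
  have hC0 : 0 < C := by nlinarith [norm_nonneg (a - b)]
  set δ : ℝ := ε * (1/2 : ℝ)^(k+2) with hδdef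
  have hδ0 : 0 < δ := by positivity
  set γ : ℝ := δ / (C * ((k:ℝ) + 1)) with hγdef
  have hγ0 : 0 < γ := div_pos hδ0 (mul_pos hC0 (by positivity))
  set N : ℕ := ⌈1/γ⌉₊ with hNdef
  set coord : (Fin (k+1) → Fin (N+1)) → ℕ → ℝ := fun j i =>
    if h : i < k + 1 then γ * ((j ⟨i, h⟩ : ℕ) : ℝ) else 0 with hcoorddef
  have hcoord0 : ∀ j i, 0 ≤ coord j i := by
    intro j i
    simp only [hcoorddef]
    split
    · positivity
    · exact le_refl 0
  set Wf : (Fin (k+1) → Fin (N+1)) → X := fun j =>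
    (∑ i ∈ Finset.range k, coord j i • v i) -
      (2 - ∑ i ∈ Finset.range (k+1), coord j i) • (a - b) with hWfdef
  -- obligations
  have hpeel : ∀ j : Fin (k+1) → Fin (N+1), ∀ᶠ m in atTop, ∀ᶠ n in atTop,
      (0 < coord j k → ‖Wf j - (coord j k) • (a - b)‖ - δ ≤
        ‖(coord j k) • (x n - x m) + Wf j‖) := by
    intro j
    by_cases hj : 0 < coord j k
    · exact (peel_aux ha hb (Wf j) hj hδ0).mono fun m hm => hm.mono fun n hn _ => hn
    · exact Eventually.of_forall fun m => Eventually.of_forall fun n h => absurd h hj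
  have hall : ∀ᶠ m in atTop, ∀ᶠ n in atTop, ∀ j : Fin (k+1) → Fin (N+1),
      (0 < coord j k → ‖Wf j - (coord j k) • (a - b)‖ - δ ≤
        ‖(coord j k) • (x n - x m) + Wf j‖) := by
    have h1 := Filter.eventually_all.mpr hpeel
    exact h1.mono fun m hm => Filter.eventually_all.mpr hm
  obtain ⟨m, hm1, hm2⟩ := (hall.and (eventually_ge_atTop k)).exists
  obtain ⟨n, hn1, hn2⟩ := (hm1.and (eventually_ge_atTop k)).exists
  refine ⟨(m, n), hm2, hn2, ?_⟩
  intro μ hμ0 hμ1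
  -- rewrite the goal sum using `v` and the new vector `x n - x m`
  have egoal : (∑ i ∈ Finset.range (k+1),
        μ i • (x ((Function.update q k (m, n)) i).2 - x ((Function.update q k (m, n)) i).1)) =
      (∑ i ∈ Finset.range k, μ i • v i) + μ k • (x n - x m) := by
    rw [Finset.sum_range_succ]
    congr 1
    · exact Finset.sum_congr rfl fun i hi => by
        rw [Function.update_of_ne (Nat.ne_of_lt (Finset.mem_range.mp hi))]
    · rw [Function.update_self]
  rw [egoal]
  -- bounds on μ
  have hμle1 : ∀ i, i ∈ Finset.range (k+1) → μ i ≤ 1 := fun i hi =>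
    le_trans (Finset.single_le_sum (fun j _ => hμ0 j) hi) hμ1
  -- snapped coordinates
  set jn : ℕ → ℕ := fun i => ⌊μ i / γ⌋₊ with hjndef
  have hjnN : ∀ i : Fin (k+1), jn i.1 < N + 1 := by
    intro i
    have h1 : μ i.1 / γ ≤ 1 / γ := by
      gcongr
      exact hμle1 i.1 (Finset.mem_range.mpr i.2)
    have h2 : jn i.1 ≤ ⌊1 / γ⌋₊ := Nat.floor_le_floor h1
    have h3 : ⌊(1:ℝ) / γ⌋₊ ≤ ⌈(1:ℝ) / γ⌉₊ := Nat.floor_le_ceil _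
    exact Nat.lt_succ_of_le (le_trans h2 h3)
  set jf : Fin (k+1) → Fin (N+1) := fun i => ⟨jn i.1, hjnN i⟩ with hjfdef
  set c : ℕ → ℝ := coord jf with hcdef
  have hc_eq : ∀ i, i < k + 1 → c i = γ * ((jn i : ℕ) : ℝ) := by
    intro i hi
    simp only [hcdef, hcoorddef, hjfdef, dif_pos hi]
  have hc0 : ∀ i, 0 ≤ c i := hcoord0 jf
  have hcle : ∀ i, i < k + 1 → c i ≤ μ i := by
    intro i hi
    rw [hc_eq i hi]
    have h0 : (0:ℝ) ≤ μ i / γ := div_nonneg (hμ0 i) hγ0.le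
    calc γ * ((jn i : ℕ) : ℝ) ≤ γ * (μ i / γ) := by
          have := Nat.floor_le h0
          exact mul_le_mul_of_nonneg_left this hγ0.le
      _ = μ i := by field_simp
  have hgap : ∀ i, i < k + 1 → μ i - c i ≤ γ := by
    intro i hi
    rw [hc_eq i hi]
    have h2 := Nat.lt_floor_add_one (μ i / γ)
    have h3 : μ i < (((jn i : ℕ) : ℝ) + 1) * γ := by
      have := (div_lt_iff₀ hγ0).mp h2
      exact this
    nlinarith [h3]
  have hsumc : (∑ i ∈ Finset.range (k+1), c i) ≤ ∑ i ∈ Finset.range (k+1), μ i :=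
    Finset.sum_le_sum fun i hi => hcle i (Finset.mem_range.mp hi)
  have hsumgap : (∑ i ∈ Finset.range (k+1), μ i) - (∑ i ∈ Finset.range (k+1), c i) ≤
      ((k:ℝ)+1) * γ := by
    rw [← Finset.sum_sub_distrib]
    calc (∑ i ∈ Finset.range (k+1), (μ i - c i)) ≤ ∑ _i ∈ Finset.range (k+1), γ :=
        Finset.sum_le_sum fun i hi => hgap i (Finset.mem_range.mp hi)
      _ = ((k:ℝ)+1) * γ := by
          rw [Finset.sum_const, Finset.card_range, nsmul_eq_mul]
          push_cast
          ring
  -- the snapping error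
  have hCgap : (2*M + ‖a - b‖) * (((k:ℝ)+1) * γ) ≤ δ := by
    have hγval : C * (((k:ℝ)+1) * γ) = δ := by
      rw [hγdef]
      field_simp
    nlinarith [hγ0, hC0, mul_pos hγ0 (show (0:ℝ) < (k:ℝ)+1 by positivity)]
  have hsnap : ‖(((∑ i ∈ Finset.range k, μ i • v i) + μ k • (x n - x m)) -
        (2 - ∑ i ∈ Finset.range (k+1), μ i) • (a - b)) -
      (((∑ i ∈ Finset.range k, c i • v i) + c k • (x n - x m)) -
        (2 - ∑ i ∈ Finset.range (k+1), c i) • (a - b))‖ ≤ δ := by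
    have hsplitμ : (∑ i ∈ Finset.range k, μ i • v i) + μ k • (x n - x m) =
        ∑ i ∈ Finset.range (k+1), μ i • (if i = k then x n - x m else v i) := by
      rw [Finset.sum_range_succ, if_pos rfl]
      congr 1
      exact Finset.sum_congr rfl fun i hi => by
        rw [if_neg (Nat.ne_of_lt (Finset.mem_range.mp hi))]
    have hsplitc : (∑ i ∈ Finset.range k, c i • v i) + c k • (x n - x m) =
        ∑ i ∈ Finset.range (k+1), c i • (if i = k then x n - x m else v i) := by
      rw [Finset.sum_range_succ, if_pos rfl]
      congr 1
      exact Finset.sum_congr rfl fun i hi => by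
        rw [if_neg (Nat.ne_of_lt (Finset.mem_range.mp hi))]
    rw [hsplitμ, hsplitc]
    have hid : ((∑ i ∈ Finset.range (k+1), μ i • (if i = k then x n - x m else v i)) -
          (2 - ∑ i ∈ Finset.range (k+1), μ i) • (a - b)) -
        ((∑ i ∈ Finset.range (k+1), c i • (if i = k then x n - x m else v i)) -
          (2 - ∑ i ∈ Finset.range (k+1), c i) • (a - b)) =
        (∑ i ∈ Finset.range (k+1), (μ i - c i) • (if i = k then x n - x m else v i)) +
          ((∑ i ∈ Finset.range (k+1), μ i) - (∑ i ∈ Finset.range (k+1), c i)) • (a - b) := by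
      simp only [sub_smul, Finset.sum_sub_distrib]
      abel
    rw [hid]
    have hw2M : ∀ i : ℕ, ‖(if i = k then x n - x m else v i)‖ ≤ 2*M := by
      intro i
      split
      · exact hv2M n m
      · exact hv2M _ _
    have h1 : ‖∑ i ∈ Finset.range (k+1), (μ i - c i) • (if i = k then x n - x m else v i)‖ ≤
        ((∑ i ∈ Finset.range (k+1), μ i) - (∑ i ∈ Finset.range (k+1), c i)) * (2*M) := by
      calc ‖∑ i ∈ Finset.range (k+1), (μ i - c i) • (if i = k then x n - x m else v i)‖
          ≤ ∑ i ∈ Finset.range (k+1), ‖(μ i - c i) • (if i = k then x n - x m else v i)‖ :=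
            norm_sum_le _ _
        _ ≤ ∑ i ∈ Finset.range (k+1), (μ i - c i) * (2*M) := by
            apply Finset.sum_le_sum
            intro i hi
            rw [norm_smul,
              Real.norm_of_nonneg (by linarith [hcle i (Finset.mem_range.mp hi)])]
            exact mul_le_mul_of_nonneg_left (hw2M i)
              (by linarith [hcle i (Finset.mem_range.mp hi)])
        _ = ((∑ i ∈ Finset.range (k+1), μ i) - (∑ i ∈ Finset.range (k+1), c i)) * (2*M) := by
            rw [← Finset.sum_mul, Finset.sum_sub_distrib]
    have hS0 : 0 ≤ (∑ i ∈ Finset.range (k+1), μ i) - (∑ i ∈ Finset.range (k+1), c i) := by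
      linarith [hsumc]
    have h2 : ‖((∑ i ∈ Finset.range (k+1), μ i) - (∑ i ∈ Finset.range (k+1), c i)) • (a - b)‖ =
        ((∑ i ∈ Finset.range (k+1), μ i) - (∑ i ∈ Finset.range (k+1), c i)) * ‖a - b‖ := by
      rw [norm_smul, Real.norm_of_nonneg hS0]
    calc ‖(∑ i ∈ Finset.range (k+1), (μ i - c i) • (if i = k then x n - x m else v i)) +
          ((∑ i ∈ Finset.range (k+1), μ i) - (∑ i ∈ Finset.range (k+1), c i)) • (a - b)‖
        ≤ ‖∑ i ∈ Finset.range (k+1), (μ i - c i) • (if i = k then x n - x m else v i)‖ +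
          ‖((∑ i ∈ Finset.range (k+1), μ i) - (∑ i ∈ Finset.range (k+1), c i)) • (a - b)‖ :=
          norm_add_le _ _
      _ ≤ ((∑ i ∈ Finset.range (k+1), μ i) - (∑ i ∈ Finset.range (k+1), c i)) * (2*M) +
          ((∑ i ∈ Finset.range (k+1), μ i) - (∑ i ∈ Finset.range (k+1), c i)) * ‖a - b‖ := by
          rw [h2]
          linarith [h1]
      _ = ((∑ i ∈ Finset.range (k+1), μ i) - (∑ i ∈ Finset.range (k+1), c i)) *
            (2*M + ‖a - b‖) := by ring
      _ ≤ (((k:ℝ)+1) * γ) * (2*M + ‖a - b‖) :=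
          mul_le_mul_of_nonneg_right hsumgap (by nlinarith [norm_nonneg (a - b)])
      _ = (2*M + ‖a - b‖) * (((k:ℝ)+1) * γ) := by ring
      _ ≤ δ := hCgap
  -- budget identity
  have hbudget : ε * (1 - (1/2:ℝ)^(k+1)) = ε * (1 - (1/2:ℝ)^k) + 2*δ := by
    have hp1 : (1/2:ℝ)^(k+1) = (1/2:ℝ)^k * (1/2) := pow_succ _ _
    have hp2 : (1/2:ℝ)^(k+2) = (1/2:ℝ)^(k+1) * (1/2) := pow_succ _ _
    rw [hδdef, hp2, hp1]; ring
  -- lower bound for the snapped combination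
  have hmain : 2*‖a - b‖ - ε*(1 - (1/2:ℝ)^k) - δ ≤
      ‖((∑ i ∈ Finset.range k, c i • v i) + c k • (x n - x m)) -
        (2 - ∑ i ∈ Finset.range (k+1), c i) • (a - b)‖ := by
    by_cases hck : jn k = 0
    · -- Case A : the new coordinate vanishes; use the invariant directly
      have hck0 : c k = 0 := by rw [hc_eq k (Nat.lt_succ_self k), hck]; simp
      have e2 : (∑ i ∈ Finset.range (k+1), c i) = ∑ i ∈ Finset.range k, c i := by
        rw [Finset.sum_range_succ, hck0, add_zero]
      rw [hck0, zero_smul, add_zero, e2]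
      have hle : (∑ i ∈ Finset.range k, c i) ≤ 1 := by
        rw [← e2]; exact le_trans hsumc hμ1
      have := hInv c hc0 hle
      linarith [hδ0]
    · -- Case B : peel the new coordinate using the served obligation
      have hckpos : 0 < c k := by
        rw [hc_eq k (Nat.lt_succ_self k)]
        exact mul_pos hγ0 (by exact_mod_cast Nat.pos_of_ne_zero hck)
      have hob : ‖Wf jf - c k • (a - b)‖ - δ ≤ ‖c k • (x n - x m) + Wf jf‖ := hn1 jf hckpos
      have hWc : Wf jf = (∑ i ∈ Finset.range k, c i • v i) -
          (2 - ∑ i ∈ Finset.range (k+1), c i) • (a - b) := by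
        simp only [hWfdef, ← hcdef]
      have e1 : ((∑ i ∈ Finset.range k, c i • v i) + c k • (x n - x m)) -
          (2 - ∑ i ∈ Finset.range (k+1), c i) • (a - b) = c k • (x n - x m) + Wf jf := by
        rw [hWc]; abel
      have e2 : Wf jf - (c k) • (a - b) =
          (∑ i ∈ Finset.range k, c i • v i) - (2 - ∑ i ∈ Finset.range k, c i) • (a - b) := by
        rw [hWc, Finset.sum_range_succ]
        have hsm : (2 - ((∑ i ∈ Finset.range k, c i) + c k)) • (a - b) =
            (2 - ∑ i ∈ Finset.range k, c i) • (a - b) - (c k) • (a - b) := by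
          rw [← sub_smul]; congr 1; ring
        rw [hsm]; abel
      have hle : (∑ i ∈ Finset.range k, c i) ≤ 1 := by
        have h1 : (∑ i ∈ Finset.range k, c i) ≤ ∑ i ∈ Finset.range (k+1), c i := by
          rw [Finset.sum_range_succ]
          linarith [hc0 k]
        exact le_trans h1 (le_trans hsumc hμ1)
      have hI := hInv c hc0 hle
      rw [e1]
      rw [e2] at hob
      linarith [hI, hob]
  -- combine snapping error with the lower bound
  have htri : ‖((∑ i ∈ Finset.range k, c i • v i) + c k • (x n - x m)) -
        (2 - ∑ i ∈ Finset.range (k+1), c i) • (a - b)‖ -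
      ‖((∑ i ∈ Finset.range k, μ i • v i) + μ k • (x n - x m)) -
        (2 - ∑ i ∈ Finset.range (k+1), μ i) • (a - b)‖ ≤ δ := by
    have h1 := norm_sub_norm_le
      (((∑ i ∈ Finset.range k, c i • v i) + c k • (x n - x m)) -
        (2 - ∑ i ∈ Finset.range (k+1), c i) • (a - b))
      (((∑ i ∈ Finset.range k, μ i • v i) + μ k • (x n - x m)) -
        (2 - ∑ i ∈ Finset.range (k+1), μ i) • (a - b))
    have h2 : ‖(((∑ i ∈ Finset.range k, c i • v i) + c k • (x n - x m)) -
          (2 - ∑ i ∈ Finset.range (k+1), c i) • (a - b)) -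
        (((∑ i ∈ Finset.range k, μ i • v i) + μ k • (x n - x m)) -
          (2 - ∑ i ∈ Finset.range (k+1), μ i) • (a - b))‖ =
        ‖(((∑ i ∈ Finset.range k, μ i • v i) + μ k • (x n - x m)) -
          (2 - ∑ i ∈ Finset.range (k+1), μ i) • (a - b)) -
        (((∑ i ∈ Finset.range k, c i • v i) + c k • (x n - x m)) -
          (2 - ∑ i ∈ Finset.range (k+1), c i) • (a - b))‖ := norm_sub_rev _ _
    rw [h2] at h1
    linarith [hsnap, h1]
  linarith [hmain, htri, hbudget]
lemma inv_congr {x : ℕ → X} {u : X} {ε : ℝ} {q q' : ℕ → ℕ × ℕ} {k : ℕ}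
    (h : ∀ i, i < k → q i = q' i) (hI : Inv x u ε q k) : Inv x u ε q' k := by
  intro μ hμ0 hμ1
  have hs : (∑ i ∈ Finset.range k, μ i • (x (q' i).2 - x (q' i).1)) =
      ∑ i ∈ Finset.range k, μ i • (x (q i).2 - x (q i).1) :=
    Finset.sum_congr rfl fun i hi => by rw [h i (Finset.mem_range.mp hi)]
  rw [hs]
  exact hI μ hμ0 hμ1

lemma build_aux {x : ℕ → X} {a b : X}
    (ha : Tendsto x atTop (@nhds X (ballTopology X) a))
    (hb : Tendsto x atTop (@nhds X (ballTopology X) b))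
    {M ε : ℝ} (hM : ∀ n, ‖x n‖ ≤ M) (hε : 0 < ε) :
    ∃ q : ℕ → ℕ × ℕ, (∀ k, k ≤ (q k).1 ∧ k ≤ (q k).2) ∧ ∀ k, Inv x (a - b) ε q k := by
  have base : ∀ q : ℕ → ℕ × ℕ, Inv x (a - b) ε q 0 := by
    intro q μ _ _
    simp only [Finset.range_zero, Finset.sum_empty, zero_sub, norm_neg, norm_smul, pow_zero]
    have h2 : ‖(2:ℝ) - 0‖ = 2 := by norm_num
    rw [h2]
    nlinarith [norm_nonneg (a - b)]
  have step₂ : ∀ (q : ℕ → ℕ × ℕ) (k : ℕ), ∃ p : ℕ × ℕ,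
      (Inv x (a - b) ε q k →
        k ≤ p.1 ∧ k ≤ p.2 ∧ Inv x (a - b) ε (Function.update q k p) (k+1)) := by
    intro q k
    by_cases h : Inv x (a - b) ε q k
    · obtain ⟨p, h1, h2, h3⟩ := step_aux ha hb hM hε q k h
      exact ⟨p, fun _ => ⟨h1, h2, h3⟩⟩
    · exact ⟨(0,0), fun h' => absurd h' h⟩
  choose F hF using step₂
  let Q : ℕ → ℕ → ℕ × ℕ := fun k =>
    Nat.rec (fun _ => (0,0)) (fun j ih => Function.update ih j (F ih j)) k
  have hQsucc : ∀ k, Q (k+1) = Function.update (Q k) k (F (Q k) k) := fun _ => rfl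
  have hQInv : ∀ k, Inv x (a - b) ε (Q k) k := by
    intro k
    induction k with
    | zero => exact base _
    | succ k ih =>
        rw [hQsucc]
        exact (hF (Q k) k ih).2.2
  set q : ℕ → ℕ × ℕ := fun k => F (Q k) k with hqdef
  have hagree : ∀ j k, k < j → Q j k = q k := by
    intro j
    induction j with
    | zero => intro k hk; omega
    | succ j ih =>
        intro k hk
        rw [hQsucc]
        rcases Nat.lt_succ_iff_lt_or_eq.mp hk with h | h
        · rw [Function.update_of_ne (Nat.ne_of_lt h)]
          exact ih k h
        · subst h
          rw [Function.update_self]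
  refine ⟨q, ?_, ?_⟩
  · intro k
    have h := hF (Q k) k (hQInv k)
    exact ⟨h.1, h.2.1⟩
  · intro k
    exact inv_congr (fun i hik => hagree k i hik) (hQInv k)

lemma bound_aux {x : ℕ → X}
    (hweak : ∀ f : X →L[ℝ] ℝ, ∃ L : ℝ, Tendsto (fun n => f (x n)) atTop (nhds L)) :
    ∃ M : ℝ, 0 < M ∧ ∀ n, ‖x n‖ ≤ M := by
  have h : ∀ f : StrongDual ℝ X, ∃ C : ℝ,
      ∀ n : ℕ, ‖(NormedSpace.inclusionInDoubleDual ℝ X (x n)) f‖ ≤ C := by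
    intro f
    obtain ⟨L, hL⟩ := hweak f
    obtain ⟨C, hC⟩ := hL.norm.bddAbove_range
    exact ⟨C, fun n => by simpa using hC ⟨n, rfl⟩⟩
  obtain ⟨C', hC'⟩ := banach_steinhaus h
  refine ⟨max C' 1, lt_of_lt_of_le one_pos (le_max_right _ _), fun n => ?_⟩
  have hnorm : ‖NormedSpace.inclusionInDoubleDual ℝ X (x n)‖ = ‖x n‖ :=
    (NormedSpace.inclusionInDoubleDualLi ℝ (E := X)).norm_map (x n)
  calc ‖x n‖ = ‖NormedSpace.inclusionInDoubleDual ℝ X (x n)‖ := hnorm.symm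
    _ ≤ C' := hC' n
    _ ≤ max C' 1 := le_max_left _ _

end Aux

/-- In a real Banach space, a sequence whose images under every continuous
linear functional converge has at most one limit in the ball topology. -/
theorem ball_topology_unique_limit
    {X : Type*} [NormedAddCommGroup X] [NormedSpace ℝ X] [CompleteSpace X]
    (x : ℕ → X)
    (hweak : ∀ f : X →L[ℝ] ℝ, ∃ L : ℝ, Tendsto (fun n => f (x n)) atTop (nhds L))
    (a b : X)
    (ha : Tendsto x atTop (@nhds X (ballTopology X) a))
    (hb : Tendsto x atTop (@nhds X (ballTopology X) b)) :
    a = b := by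
  by_contra hab
  have hd0 : (0:ℝ) < ‖a - b‖ := by
    rw [norm_pos_iff, sub_ne_zero]
    exact hab
  obtain ⟨M, hM0, hM⟩ := bound_aux hweak
  have hε : (0:ℝ) < ‖a - b‖ / 2 := by linarith
  obtain ⟨q, hq, hqInv⟩ := build_aux ha hb hM hε
  set v : ℕ → X := fun i => x (q i).2 - x (q i).1 with hvdef
  set r : ℝ := 3 * ‖a - b‖ / 2 with hrdef
  have hr0 : 0 < r := by rw [hrdef]; linarith
  set S : Set X := {z : X | ∃ (kk : ℕ) (μ : ℕ → ℝ), (∀ i, 0 ≤ μ i) ∧ (∀ i, kk ≤ i → μ i = 0) ∧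
      (∑ i ∈ Finset.range kk, μ i) = 1 ∧ z = ∑ i ∈ Finset.range kk, μ i • v i} with hSdef
  have hvS : ∀ i0, v i0 ∈ S := by
    intro i0
    have hsum1 : (∑ i ∈ Finset.range (i0+1), (if i = i0 then (1:ℝ) else 0)) = 1 := by
      rw [Finset.sum_ite_eq' (Finset.range (i0+1))]
      simp
    have hsum2 : (∑ i ∈ Finset.range (i0+1), (if i = i0 then (1:ℝ) else 0) • v i) = v i0 := by
      have hcongr : ∀ i ∈ Finset.range (i0+1), (if i = i0 then (1:ℝ) else 0) • v i
          = if i = i0 then v i else 0 := by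
        intro i _
        by_cases h : i = i0 <;> simp [h]
      rw [Finset.sum_congr rfl hcongr, Finset.sum_ite_eq' (Finset.range (i0+1))]
      simp
    exact ⟨i0+1, fun i => if i = i0 then 1 else 0,
      fun i => by by_cases h : i = i0 <;> simp [h],
      fun i hi => if_neg (by omega), hsum1, hsum2.symm⟩
  have hdist : ∀ z ∈ S, r < ‖z - (a - b)‖ := by
    rintro z ⟨kk, μ, hμ0, hμsupp, hμ1, rfl⟩
    have h := hqInv kk μ hμ0 (le_of_eq hμ1)
    rw [hμ1] at h
    have h2 : ((2:ℝ) - 1) • (a - b) = (a - b) := by norm_num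
    rw [h2] at h
    have hpow : (0:ℝ) < (1/2:ℝ)^kk := by positivity
    have h3 : r < 2*‖a - b‖ - ‖a - b‖/2*(1 - (1/2:ℝ)^kk) := by
      rw [hrdef]
      nlinarith [mul_pos hd0 hpow]
    linarith
  have hSconv : Convex ℝ S := by
    rintro z ⟨kz, μz, h0z, hsz, h1z, rfl⟩ z' ⟨kz', μz', h0z', hsz', h1z', rfl⟩ θ θ' hθ hθ' hθθ
    refine ⟨max kz kz', fun i => θ * μz i + θ' * μz' i, ?_, ?_, ?_, ?_⟩
    · intro i
      dsimp only
      exact add_nonneg (mul_nonneg hθ (h0z i)) (mul_nonneg hθ' (h0z' i))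
    · intro i hi
      dsimp only
      rw [hsz i (le_trans (le_max_left _ _) hi), hsz' i (le_trans (le_max_right _ _) hi)]
      ring
    · dsimp only
      have e1 : ∑ i ∈ Finset.range (max kz kz'), μz i = ∑ i ∈ Finset.range kz, μz i := by
        refine (Finset.sum_subset (Finset.range_subset_range.mpr (le_max_left _ _)) ?_).symm
        intro i _ hni
        exact hsz i (by simpa using hni)
      have e2 : ∑ i ∈ Finset.range (max kz kz'), μz' i = ∑ i ∈ Finset.range kz', μz' i := by
        refine (Finset.sum_subset (Finset.range_subset_range.mpr (le_max_right _ _)) ?_).symm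
        intro i _ hni
        exact hsz' i (by simpa using hni)
      rw [Finset.sum_add_distrib, ← Finset.mul_sum, ← Finset.mul_sum, e1, e2, h1z, h1z']
      linarith [hθθ]
    · dsimp only
      have e1 : ∑ i ∈ Finset.range (max kz kz'), μz i • v i =
          ∑ i ∈ Finset.range kz, μz i • v i := by
        refine (Finset.sum_subset (Finset.range_subset_range.mpr (le_max_left _ _)) ?_).symm
        intro i _ hni
        rw [hsz i (by simpa using hni), zero_smul]
      have e2 : ∑ i ∈ Finset.range (max kz kz'), μz' i • v i =
          ∑ i ∈ Finset.range kz', μz' i • v i := by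
        refine (Finset.sum_subset (Finset.range_subset_range.mpr (le_max_right _ _)) ?_).symm
        intro i _ hni
        rw [hsz' i (by simpa using hni), zero_smul]
      have e3 : ∀ i, (θ * μz i + θ' * μz' i) • v i = θ • (μz i • v i) + θ' • (μz' i • v i) := by
        intro i
        rw [add_smul, mul_smul, mul_smul]
      rw [Finset.sum_congr rfl (fun i _ => e3 i), Finset.sum_add_distrib,
        ← Finset.smul_sum, ← Finset.smul_sum, e1, e2]
  set U : Set X := S + Metric.ball (0:X) r with hUdef
  have hUopen : IsOpen U := IsOpen.add_left Metric.isOpen_ball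
  have hUconv : Convex ℝ U := hSconv.add (convex_ball 0 r)
  have hUu : (a - b) ∉ U := by
    rintro ⟨z, hz, w, hw, hsum⟩
    rw [Metric.mem_ball, dist_zero_right] at hw
    have h2 : z - (a - b) = -w := by rw [← hsum]; show z - (z + w) = -w; abel
    have h3 := hdist z hz
    rw [h2, norm_neg] at h3
    linarith
  obtain ⟨f, hf⟩ := geometric_hahn_banach_open_point hUconv hUopen hUu
  have hfS : ∀ z ∈ S, ∀ w : X, ‖w‖ < r → f z + f w < f (a - b) := by
    intro z hz w hw
    have hmem : z + w ∈ U := ⟨z, hz, w, by rwa [Metric.mem_ball, dist_zero_right], rfl⟩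
    have := hf _ hmem
    rwa [map_add] at this
  obtain ⟨L, hL⟩ := hweak f
  have hm2 : Tendsto (fun i => (q i).2) atTop atTop :=
    tendsto_atTop_mono (fun i => (hq i).2) tendsto_id
  have hm1 : Tendsto (fun i => (q i).1) atTop atTop :=
    tendsto_atTop_mono (fun i => (hq i).1) tendsto_id
  have hvlim : Tendsto (fun i => f (v i)) atTop (nhds 0) := by
    have he : (fun i => f (v i)) = fun i => f (x (q i).2) - f (x (q i).1) := by
      funext i
      rw [hvdef]
      exact map_sub f _ _
    rw [he]
    have h0 : (0:ℝ) = L - L := by ring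
    rw [h0]
    exact (hL.comp hm2).sub (hL.comp hm1)
  have hzero : ∀ z ∈ S, f z < f (a - b) := by
    intro z hz
    have := hfS z hz 0 (by simpa using hr0)
    simpa using this
  have h3 : 0 ≤ f (a - b) :=
    le_of_tendsto hvlim (Eventually.of_forall fun i => (hzero _ (hvS i)).le)
  have h4 : f (a - b) ≤ 0 := by
    have hwn : ‖(5/4 : ℝ) • (a - b)‖ < r := by
      rw [norm_smul, hrdef]
      have h5 : ‖(5/4:ℝ)‖ = 5/4 := by norm_num
      rw [h5]
      nlinarith [hd0]
    have hstep : ∀ i, f (v i) ≤ -(1/4) * f (a - b) := by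
      intro i
      have h6 := hfS (v i) (hvS i) _ hwn
      have h7 : f ((5/4:ℝ) • (a - b)) = (5/4) * f (a - b) := by
        rw [map_smul, smul_eq_mul]
      rw [h7] at h6
      linarith
    have := le_of_tendsto hvlim (Eventually.of_forall hstep)
    linarith
  have h5 : f (a - b) = 0 := le_antisymm h4 h3
  have h6 : ∀ w : X, ‖w‖ < r → f w ≤ 0 := by
    intro w hw
    have hstep : ∀ i, f (v i) ≤ - f w := by
      intro i
      have := hfS (v i) (hvS i) w hw
      rw [h5] at this
      linarith
    have := le_of_tendsto hvlim (Eventually.of_forall hstep)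
    linarith
  have h7 : ∀ w : X, ‖w‖ < r → f w = 0 := by
    intro w hw
    have hn := h6 (-w) (by rwa [norm_neg])
    rw [map_neg] at hn
    have := h6 w hw
    linarith
  have h8 : f (v 0) = 0 := by
    by_cases hv0 : v 0 = 0
    · rw [hv0]; exact map_zero f
    · have hn0 : 0 < ‖v 0‖ := norm_pos_iff.mpr hv0
      have hcs0 : 0 < (r/2) / ‖v 0‖ := by positivity
      have h9 : ‖((r/2) / ‖v 0‖) • v 0‖ < r := by
        rw [norm_smul, Real.norm_of_nonneg hcs0.le, div_mul_cancel₀ _ (ne_of_gt hn0)]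
        linarith
      have h10 := h7 _ h9
      rw [map_smul, smul_eq_mul] at h10
      rcases mul_eq_zero.mp h10 with h | h
      · exact absurd h (ne_of_gt hcs0)
      · exact h
  have hlt := hzero (v 0) (hvS 0)
  rw [h8, h5] at hlt
  exact lt_irrefl 0 hlt


end BallTop
end
end

section
/- Let X be a real Banach space and let (x_n)_{n≥1} be a sequence in X such that for every continuous linear functional f ∈ X* the sequence (f(x_n))_n converges in ℝ. Then every sequence (y_k)_{k≥1} whose terms lie in the absolutely convex hull of the set {x_n : n ≥ 1} admits a subsequence (y_{k_j})_j such that (f(y_{k_j}))_j converges in ℝ for every f ∈ X*. In other words, the absolutely convex hull of a weakly Cauchy sequence is a Rosenthal set: every sequence in it has a weakly Cauchy subsequence. -/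
open Filter Topology

noncomputable section

namespace BallTop

set_option maxHeartbeats 1600000

/-- In a real Banach space, the absolutely convex hull of a weakly Cauchy
sequence is a Rosenthal set: every sequence in it has a weakly Cauchy subsequence. -/
theorem absConvHull_weaklyCauchy_rosenthal
    {X : Type*} [NormedAddCommGroup X] [NormedSpace ℝ X] [CompleteSpace X]
    (x : ℕ → X)
    (hweak : ∀ f : X →L[ℝ] ℝ, ∃ L : ℝ, Tendsto (fun n => f (x n)) atTop (nhds L))
    (y : ℕ → X)
    (hy : ∀ k, ∃ (n : ℕ) (c : Fin n → ℝ) (idx : Fin n → ℕ),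
      (∑ i, |c i|) ≤ 1 ∧ y k = ∑ i, c i • x (idx i)) :
    ∃ φ : ℕ → ℕ, StrictMono φ ∧
      ∀ f : X →L[ℝ] ℝ, ∃ L : ℝ, Tendsto (fun j => f (y (φ j))) atTop (nhds L) := by
  classical
  choose n c idx hc hrep using hy
  -- merged coefficient functions
  set a : ℕ → ℕ → ℝ := fun k m => ∑ i, if idx k i = m then c k i else 0 with ha
  set s : ℕ → ℕ := fun k => (Finset.univ.sup (idx k)) + 1 with hs
  have h0 : ∀ k m, s k ≤ m → a k m = 0 := by
    intro k m hm
    apply Finset.sum_eq_zero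
    intro i _
    have h1 : idx k i ≤ Finset.univ.sup (idx k) := Finset.le_sup (Finset.mem_univ i)
    have h2 : Finset.univ.sup (idx k) + 1 ≤ m := hm
    have : idx k i ≠ m := by omega
    simp [this]
  have h1 : ∀ k (S : Finset ℕ), (∑ m ∈ S, |a k m|) ≤ 1 := by
    intro k S
    calc ∑ m ∈ S, |a k m|
        ≤ ∑ m ∈ S, ∑ i, |if idx k i = m then c k i else 0| :=
          Finset.sum_le_sum fun m _ => Finset.abs_sum_le_sum_abs _ _
      _ = ∑ i, ∑ m ∈ S, if idx k i = m then |c k i| else 0 := by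
          rw [Finset.sum_comm]
          exact Finset.sum_congr rfl fun i _ => Finset.sum_congr rfl fun m _ => by
            split <;> simp
      _ ≤ ∑ i, |c k i| := by
          refine Finset.sum_le_sum fun i _ => ?_
          rw [Finset.sum_ite_eq]
          split <;> simp [abs_nonneg]
      _ ≤ 1 := hc k
  have h2 : ∀ k N, s k ≤ N → y k = ∑ m ∈ Finset.range N, a k m • x m := by
    intro k N hN
    have hmem : ∀ i : Fin (n k), idx k i ∈ Finset.range N := by
      intro i
      have h1 : idx k i ≤ Finset.univ.sup (idx k) := Finset.le_sup (Finset.mem_univ i)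
      have h2 : Finset.univ.sup (idx k) + 1 ≤ N := hN
      exact Finset.mem_range.2 (by omega)
    calc y k = ∑ i, c k i • x (idx k i) := hrep k
      _ = ∑ i, ∑ m ∈ Finset.range N, if idx k i = m then c k i • x m else 0 := by
          refine Finset.sum_congr rfl fun i _ => ?_
          rw [Finset.sum_ite_eq, if_pos (hmem i)]
      _ = ∑ m ∈ Finset.range N, a k m • x m := by
          rw [Finset.sum_comm]
          refine Finset.sum_congr rfl fun m _ => ?_
          rw [ha]
          rw [Finset.sum_smul]
          exact Finset.sum_congr rfl fun i _ => by split <;> simp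
  -- partial sums of coefficients
  set σ : ℕ → ℝ := fun k => ∑ m ∈ Finset.range (s k), a k m with hσdef
  have hσext : ∀ k N, s k ≤ N → σ k = ∑ m ∈ Finset.range N, a k m := by
    intro k N hN
    refine Finset.sum_subset (Finset.range_subset_range.2 hN) fun m _ hm => ?_
    exact h0 k m (le_of_not_gt fun h => hm (Finset.mem_range.2 h))
  have hσ1 : ∀ k, |σ k| ≤ 1 := fun k =>
    (Finset.abs_sum_le_sum_abs _ _).trans (h1 k _)
  have ham : ∀ k m, |a k m| ≤ 1 := by
    intro k m
    have := h1 k {m}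
    simpa using this
  -- compactness: extract a subsequence converging coordinatewise
  obtain ⟨p, -, φ, hφ, hconv⟩ :=
    IsCompact.tendsto_subseq
      (s := ({g : ℕ → ℝ | ∀ m, g m ∈ Set.Icc (-1:ℝ) 1} ×ˢ Set.Icc (-1:ℝ) 1))
      ((isCompact_pi_infinite fun _ => isCompact_Icc).prod isCompact_Icc)
      (x := fun k => (a k, σ k))
      (fun k => ⟨fun m => Set.mem_Icc.2 (abs_le.1 (ham k m)),
        Set.mem_Icc.2 (abs_le.1 (hσ1 k))⟩)
  have hb : ∀ m, Tendsto (fun j => a (φ j) m) atTop (𝓝 (p.1 m)) := by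
    intro m
    have : Tendsto (fun j => (a (φ j), σ (φ j)).1) atTop (𝓝 p.1) :=
      (continuous_fst.tendsto p).comp hconv
    exact (tendsto_pi_nhds.1 this) m
  have hσlim : Tendsto (fun j => σ (φ j)) atTop (𝓝 p.2) :=
    (continuous_snd.tendsto p).comp hconv
  refine ⟨φ, hφ, fun f => ?_⟩
  obtain ⟨L, hL⟩ := hweak f
  refine cauchySeq_tendsto_of_complete ?_
  rw [Metric.cauchySeq_iff]
  intro ε hε
  obtain ⟨M, hM⟩ := (Metric.tendsto_atTop.1 hL) (ε/8) (by positivity)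
  have hM' : ∀ m, M ≤ m → |f (x m) - L| ≤ ε/8 := fun m hm =>
    le_of_lt (by simpa [Real.dist_eq] using hM m hm)
  set P : ℕ → ℝ := fun k => ∑ m ∈ Finset.range M, a k m * f (x m) with hP
  set ρ : ℕ → ℝ := fun k => ∑ m ∈ Finset.range M, a k m with hρ
  have hkey : ∀ k, |f (y k) - (P k + L * (σ k - ρ k))| ≤ ε/8 := by
    intro k
    set N := max (s k) M with hN
    have hfy : f (y k) = ∑ m ∈ Finset.range N, a k m * f (x m) := by
      rw [h2 k N (le_max_left _ _), map_sum]
      exact Finset.sum_congr rfl fun m _ => by simp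
    have hσk : σ k = ∑ m ∈ Finset.range N, a k m := hσext k N (le_max_left _ _)
    have hsplit1 : ∑ m ∈ Finset.range N, a k m * f (x m)
        = P k + ∑ m ∈ Finset.Ico M N, a k m * f (x m) := by
      rw [hP, Finset.sum_range_add_sum_Ico _ (le_max_right _ _)]
    have hsplit2 : σ k - ρ k = ∑ m ∈ Finset.Ico M N, a k m := by
      rw [hσk, hρ, ← Finset.sum_range_add_sum_Ico (fun m => a k m) (le_max_right (s k) M)]
      ring
    rw [hfy, hsplit1, hsplit2]
    have heq : P k + (∑ m ∈ Finset.Ico M N, a k m * f (x m))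
        - (P k + L * ∑ m ∈ Finset.Ico M N, a k m)
        = ∑ m ∈ Finset.Ico M N, a k m * (f (x m) - L) := by
      rw [Finset.mul_sum]
      have hrw : P k + (∑ m ∈ Finset.Ico M N, a k m * f (x m))
          - (P k + ∑ m ∈ Finset.Ico M N, L * a k m)
          = (∑ m ∈ Finset.Ico M N, a k m * f (x m))
            - ∑ m ∈ Finset.Ico M N, L * a k m := by ring
      rw [hrw, ← Finset.sum_sub_distrib]
      exact Finset.sum_congr rfl fun m _ => by ring
    rw [heq]
    calc |∑ m ∈ Finset.Ico M N, a k m * (f (x m) - L)|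
        ≤ ∑ m ∈ Finset.Ico M N, |a k m| * |f (x m) - L| := by
          refine (Finset.abs_sum_le_sum_abs _ _).trans ?_
          exact Finset.sum_le_sum fun m _ => le_of_eq (abs_mul _ _)
      _ ≤ ∑ m ∈ Finset.Ico M N, |a k m| * (ε/8) := by
          refine Finset.sum_le_sum fun m hm => ?_
          exact mul_le_mul_of_nonneg_left (hM' m (Finset.mem_Ico.1 hm).1) (abs_nonneg _)
      _ = (∑ m ∈ Finset.Ico M N, |a k m|) * (ε/8) := by rw [Finset.sum_mul]
      _ ≤ 1 * (ε/8) := by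
          refine mul_le_mul_of_nonneg_right ?_ (by positivity)
          exact h1 k _
      _ = ε/8 := one_mul _
  -- the auxiliary sequence converges, hence is eventually close to its limit
  have hPconv : Tendsto (fun j => P (φ j) + L * (σ (φ j) - ρ (φ j))) atTop
      (𝓝 ((∑ m ∈ Finset.range M, p.1 m * f (x m))
        + L * (p.2 - ∑ m ∈ Finset.range M, p.1 m))) := by
    refine Tendsto.add ?_ (Tendsto.const_mul _ (Tendsto.sub hσlim ?_))
    · exact tendsto_finset_sum _ fun m _ => (hb m).mul_const _
    · exact tendsto_finset_sum _ fun m _ => hb m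
  set G := (∑ m ∈ Finset.range M, p.1 m * f (x m))
      + L * (p.2 - ∑ m ∈ Finset.range M, p.1 m) with hG
  obtain ⟨N₀, hN₀⟩ := (Metric.tendsto_atTop.1 hPconv) (ε/4) (by positivity)
  set g : ℕ → ℝ := fun j => P (φ j) + L * (σ (φ j) - ρ (φ j)) with hg
  refine ⟨N₀, fun j hj l hl => ?_⟩
  have e1 : |f (y (φ j)) - g j| ≤ ε/8 := hkey (φ j)
  have e2 : |f (y (φ l)) - g l| ≤ ε/8 := hkey (φ l)
  have e3 : |g j - G| < ε/4 := by
    have := hN₀ j hj; rwa [Real.dist_eq] at this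
  have e4 : |g l - G| < ε/4 := by
    have := hN₀ l hl; rwa [Real.dist_eq] at this
  rw [Real.dist_eq]
  have hdecomp : f (y (φ j)) - f (y (φ l))
      = ((f (y (φ j)) - g j) - (f (y (φ l)) - g l)) + ((g j - G) - (g l - G)) := by
    ring
  calc |f (y (φ j)) - f (y (φ l))|
      = |((f (y (φ j)) - g j) - (f (y (φ l)) - g l)) + ((g j - G) - (g l - G))| := by
        rw [hdecomp]
    _ ≤ |(f (y (φ j)) - g j) - (f (y (φ l)) - g l)| + |(g j - G) - (g l - G)| :=
        abs_add_le _ _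
    _ ≤ (|f (y (φ j)) - g j| + |f (y (φ l)) - g l|) + (|g j - G| + |g l - G|) :=
        add_le_add (abs_sub _ _) (abs_sub _ _)
    _ < ε := by linarith

end BallTop
end
end

section
/- Let X be a normed space (over ℝ or ℂ), let (x_i)_{i∈I} be a net (equivalently, a function u : ι → X together with a filter l on ι), and let x ∈ X. Then x_i → x in the ball topology b_X if and only if for every y ∈ X one has liminf_i ‖x_i − y‖ ≥ ‖x − y‖, where the liminf is taken in [0, ∞]. -/
open Filter Topology
open scoped ENNReal

noncomputable section

namespace BallTop

/-- A net `(x_i)` in a normed space (over `ℝ` or `ℂ`) converges to `x` in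
the ball topology if and only if `liminf_i ‖x_i − y‖ ≥ ‖x − y‖` for every `y`. -/
theorem tendsto_ballTopology_iff_liminf
    {𝕜 : Type*} [RCLike 𝕜] {X : Type*} [NormedAddCommGroup X] [NormedSpace 𝕜 X]
    {ι : Type*} (u : ι → X) (l : Filter ι) [l.NeBot] (x : X) :
    Tendsto u l (@nhds X (ballTopology X) x) ↔
      ∀ y : X, ENNReal.ofReal ‖x - y‖ ≤ l.liminf fun i => ENNReal.ofReal ‖u i - y‖ := by

  have key : Tendsto u l (@nhds X (ballTopology X) x) ↔
      ∀ y : X, ∀ ε : ℝ, 0 < ε → ε < ‖x - y‖ → ∀ᶠ i in l, ε < ‖u i - y‖ := by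
    rw [ballTopology, TopologicalSpace.nhds_generateFrom]
    simp only [tendsto_iInf, tendsto_principal, Set.mem_setOf_eq]
    constructor
    · intro h y ε hε hlt
      have := h ((Metric.closedBall y ε)ᶜ)
        ⟨by simp [Metric.mem_closedBall, dist_eq_norm, not_le, hlt], y, ε, hε, rfl⟩
      filter_upwards [this] with i hi
      simpa [Metric.mem_closedBall, dist_eq_norm, not_le] using hi
    · intro h s hs
      obtain ⟨hxs, y, ε, hε, rfl⟩ := hs
      have hlt : ε < ‖x - y‖ := by
        simpa [Metric.mem_closedBall, dist_eq_norm, not_le] using hxs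
      filter_upwards [h y ε hε hlt] with i hi
      simp [Metric.mem_closedBall, dist_eq_norm, not_le, hi]
  rw [key]
  constructor
  · intro h y
    rw [le_liminf_iff]
    intro b hb
    rcases eq_or_ne b 0 with rfl | hb0
    · have hx : (0:ℝ) < ‖x - y‖ := by
        by_contra hc
        simp [ENNReal.ofReal_eq_zero.2 (not_lt.1 hc)] at hb
      filter_upwards [h y (‖x - y‖ / 2) (by linarith) (by linarith)] with i hi
      have : (0:ℝ) < ‖u i - y‖ := lt_trans (by linarith) hi
      simpa [pos_iff_ne_zero] using ENNReal.ofReal_pos.2 this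
    · have hbtop : b ≠ ⊤ := (lt_of_lt_of_le hb le_top).ne
      have hpos : 0 < b.toReal := ENNReal.toReal_pos hb0 hbtop
      have hlt : b.toReal < ‖x - y‖ := (ENNReal.lt_ofReal_iff_toReal_lt hbtop).1 hb
      filter_upwards [h y b.toReal hpos hlt] with i hi
      calc b = ENNReal.ofReal b.toReal := (ENNReal.ofReal_toReal hbtop).symm
        _ < ENNReal.ofReal ‖u i - y‖ :=
          (ENNReal.ofReal_lt_ofReal_iff_of_nonneg ENNReal.toReal_nonneg).2 hi
  · intro h y
    have := h y
    rw [le_liminf_iff] at this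
    intro ε hε hlt
    have hb : ENNReal.ofReal ε < ENNReal.ofReal ‖x - y‖ :=
      (ENNReal.ofReal_lt_ofReal_iff (lt_trans hε hlt)).2 hlt
    filter_upwards [this _ hb] with i hi
    exact (ENNReal.ofReal_lt_ofReal_iff_of_nonneg hε.le).1 hi


end BallTop
end
end
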